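/- A vertex in a tournament lies in no directed triangle if and only if reversal of any minimum feedback arc set leaves it with the same in- and out-neighborhood, and deleting such a vertex decreases neither the minimum feedback arc set size nor changes it: fas(T) = fas(T - v) whenever v lies in no directed triangle. -/

import Mathlib

/-- A tournament: irreflexive, and exactly one arc between every pair of distinct vertices. -/
def IsTournament {V : Type*} (r : V → V → Prop) : Prop :=
  (∀ v, ¬ r v v) ∧ ∀ u v : V, u ≠ v → (r u v ↔ ¬ r v u)

/-- A digraph (given by its arc relation) is acyclic: no directed cycle. -/
def Acyclic {V : Type*} (r : V → V → Prop) : Prop :=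
  ∀ v, ¬ Relation.TransGen r v v

/-- The minimum size of a feedback arc set of the digraph given by relation `r`. -/
noncomputable def fas {V : Type*} (r : V → V → Prop) : ℕ :=
  sInf {n : ℕ | ∃ F : Finset (V × V), F.card = n ∧
    Acyclic (fun a b => r a b ∧ (a, b) ∉ F)}

lemma fas_le {V : Type*} (r : V → V → Prop) (F : Finset (V × V))
    (h : Acyclic (fun a b => r a b ∧ (a, b) ∉ F)) : fas r ≤ F.card :=
  Nat.sInf_le ⟨F, rfl, h⟩

lemma fas_spec {V : Type*} [Fintype V] (r : V → V → Prop) :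
    ∃ F : Finset (V × V), F.card = fas r ∧
      Acyclic (fun a b => r a b ∧ (a, b) ∉ F) := by
  classical
  have hne : {n : ℕ | ∃ F : Finset (V × V), F.card = n ∧
      Acyclic (fun a b => r a b ∧ (a, b) ∉ F)}.Nonempty := by
    refine ⟨(Finset.univ : Finset (V × V)).card, Finset.univ, rfl, fun a h => ?_⟩
    cases h with
    | single h => exact h.2 (Finset.mem_univ _)
    | tail _ h => exact h.2 (Finset.mem_univ _)
  obtain ⟨F, hF1, hF2⟩ := Nat.sInf_mem hne
  exact ⟨F, hF1, hF2⟩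

/-- Any acyclic relation extends to a strict linear order. -/
lemma exists_strict_ext {α : Type*} (q : α → α → Prop) (hq : ∀ a, ¬ Relation.TransGen q a a) :
    ∃ L : α → α → Prop, (∀ a, ¬ L a a) ∧ (∀ a b c, L a b → L b c → L a c) ∧
      (∀ a b, a ≠ b → L a b ∨ L b a) ∧ (∀ a b, q a b → L a b) := by
  classical
  set p : α → α → Prop := Relation.ReflTransGen q with hp
  haveI : IsPartialOrder α p :=
    { refl := fun a => Relation.ReflTransGen.refl
      trans := fun a b c hab hbc => hab.trans hbc
      antisymm := by
        intro a b hab hba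
        rcases Relation.reflTransGen_iff_eq_or_transGen.mp hab with rfl | h1
        · rfl
        rcases Relation.reflTransGen_iff_eq_or_transGen.mp hba with rfl | h2
        · rfl
        exact absurd (h1.trans h2) (hq _) }
  obtain ⟨t, ht, hpt⟩ := extend_partialOrder p
  haveI := ht
  refine ⟨fun a b => t a b ∧ a ≠ b, fun a h => h.2 rfl, ?_, ?_, ?_⟩
  · rintro a b c ⟨h1, h1'⟩ ⟨h2, h2'⟩
    refine ⟨IsTrans.trans _ _ _ h1 h2, ?_⟩
    rintro rfl
    exact h1' (antisymm h1 h2)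
  · intro a b hab
    rcases total_of t a b with h | h
    · exact Or.inl ⟨h, hab⟩
    · exact Or.inr ⟨h, hab.symm⟩
  · intro a b hab
    refine ⟨hpt _ _ (Relation.ReflTransGen.single hab), ?_⟩
    rintro rfl
    exact hq a (Relation.TransGen.single hab)

/-- If `v` lies in no directed triangle of a tournament `T`, then
`fas(T) = fas(T - v)`. -/
theorem stmt18 {V : Type*} [Fintype V] (r : V → V → Prop) (hT : IsTournament r)
    (v : V) (hv : ∀ a b : V, ¬ (r v a ∧ r a b ∧ r b v)) :
    fas r = fas (fun a b : {x : V // x ≠ v} => r a.1 b.1) := by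
  classical
  set W := {x : V // x ≠ v}
  set r' : W → W → Prop := fun a b => r a.1 b.1 with hr'
  obtain ⟨F, hFcard, hFac⟩ := fas_spec r
  obtain ⟨F', hF'card, hF'ac⟩ := fas_spec r'
  apply le_antisymm
  · -- fas r ≤ fas r'
    obtain ⟨L, hLirr, hLtrans, hLtot, hLext⟩ :=
      exists_strict_ext (fun a b : W => r' a b ∧ (a, b) ∉ F') hF'ac
    have hback : ∀ a b : W, r' a b → L b a → (a, b) ∈ F' := by
      intro a b hab hba
      by_contra hF
      exact hLirr a (hLtrans _ _ _ (hLext _ _ ⟨hab, hF⟩) hba)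
    set g : V → ℕ := fun x => if x = v then 1 else if r x v then 0 else 2 with hg
    set s : V → V → Prop := fun x y => g x < g y ∨
        (g x = g y ∧ ∃ (hx : x ≠ v) (hy : y ≠ v), L ⟨x, hx⟩ ⟨y, hy⟩) with hs
    have hgv1 : g v = 1 := by simp [hg]
    have hg0 : ∀ x, x ≠ v → r x v → g x = 0 := by
      intro x h1 h2; simp [hg, h1, h2]
    have hg2 : ∀ x, x ≠ v → ¬ r x v → g x = 2 := by
      intro x h1 h2; simp [hg, h1, h2]
    have hgv : ∀ x : V, g x = 1 → x = v := by
      intro x hx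
      by_contra h
      by_cases h2 : r x v
      · rw [hg0 x h h2] at hx; omega
      · rw [hg2 x h h2] at hx; omega
    have hs_trans : ∀ x y z, s x y → s y z → s x z := by
      rintro x y z (h1 | ⟨he1, hx, hy, hL1⟩) (h2 | h2)
      · exact Or.inl (h1.trans h2)
      · exact Or.inl (h2.1 ▸ h1)
      · exact Or.inl (he1 ▸ h2)
      · obtain ⟨he2, hy2, hz, hL2⟩ := h2
        exact Or.inr ⟨he1.trans he2, hx, hz, hLtrans _ _ _ hL1 hL2⟩
    have hs_irr : ∀ x, ¬ s x x := by
      rintro x (h | ⟨_, hx, hy, hL⟩)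
      · omega
      · exact hLirr _ hL
    set G : Finset (V × V) := Finset.univ.filter (fun p => r p.1 p.2 ∧ s p.2 p.1) with hG
    have hsub : ∀ x y : V, r x y → (x, y) ∉ G → s x y := by
      intro x y hxy hnG
      have hns : ¬ s y x := by
        intro h
        exact hnG (Finset.mem_filter.mpr ⟨Finset.mem_univ _, hxy, h⟩)
      have hxny : x ≠ y := by rintro rfl; exact hT.1 x hxy
      rcases lt_trichotomy (g x) (g y) with h | h | h
      · exact Or.inl h
      · have hxv : x ≠ v := by
          intro hh
          have h1 : g y = 1 := by rw [← h, hh, hgv1]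
          exact hxny (hh.trans (hgv y h1).symm)
        have hyv : y ≠ v := by
          intro hh
          have h1 : g x = 1 := by rw [h, hh, hgv1]
          exact hxny ((hgv x h1).trans hh.symm)
        have hne : (⟨x, hxv⟩ : W) ≠ ⟨y, hyv⟩ := fun hh => hxny (congrArg Subtype.val hh)
        rcases hLtot ⟨x, hxv⟩ ⟨y, hyv⟩ hne with hL | hL
        · exact Or.inr ⟨h, hxv, hyv, hL⟩
        · exact absurd (Or.inr ⟨h.symm, hyv, hxv, hL⟩) hns
      · exact absurd (Or.inl h) hns
    have htc : ∀ a b : V, Relation.TransGen s a b → s a b := by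
      intro a b h
      induction h with
      | single h => exact h
      | tail _ h ih => exact hs_trans _ _ _ ih h
    have hac : Acyclic (fun a b : V => r a b ∧ (a, b) ∉ G) := by
      intro x hx
      exact hs_irr x (htc x x (Relation.TransGen.mono (fun a b h => hsub a b h.1 h.2) _ _ hx))
    have hGsub : G ⊆ F'.image (fun q : W × W => (q.1.1, q.2.1)) := by
      intro p hp
      obtain ⟨-, hxy, hsyx⟩ := Finset.mem_filter.mp hp
      obtain ⟨x, y⟩ := p
      simp only at hxy hsyx
      rcases hsyx with h | ⟨he, hy, hx, hL⟩
      · -- g y < g x : impossible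
        exfalso
        by_cases hxv : x = v
        · have hyv : y ≠ v := by
            intro hh; rw [hxv, hh] at hxy; exact hT.1 v hxy
          have hry : ¬ r y v := by
            have := (hT.2 v y (Ne.symm hyv)).mp (by rw [← hxv]; exact hxy)
            exact this
          rw [hxv, hgv1, hg2 y hyv hry] at h
          omega
        · by_cases hyv : y = v
          · have hrx : r x v := by rw [← hyv]; exact hxy
            rw [hyv, hgv1, hg0 x hxv hrx] at h
            omega
          · by_cases hry : r y v
            · have hrx : ¬ r x v := by
                intro hrx
                rw [hg0 x hxv hrx] at h
                omega
              have hrv : r v x := (hT.2 v x (Ne.symm hxv)).mpr hrx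
              exact hv x y ⟨hrv, hxy, hry⟩
            · rw [hg2 y hyv hry] at h
              by_cases hrx : r x v
              · rw [hg0 x hxv hrx] at h; omega
              · rw [hg2 x hxv hrx] at h; omega
      · refine Finset.mem_image.mpr ⟨(⟨x, hx⟩, ⟨y, hy⟩), ?_, rfl⟩
        exact hback _ _ hxy hL
    calc fas r ≤ G.card := fas_le r G hac
      _ ≤ (F'.image (fun q : W × W => (q.1.1, q.2.1))).card := Finset.card_le_card hGsub
      _ ≤ F'.card := Finset.card_image_le
      _ = _ := hF'card
  · -- fas r' ≤ fas r
    set G' : Finset (W × W) := Finset.univ.filter (fun p => (p.1.1, p.2.1) ∈ F) with hG'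
    have hac : Acyclic (fun a b : W => r' a b ∧ (a, b) ∉ G') := by
      intro a ha
      have : Relation.TransGen (fun x y : V => r x y ∧ (x, y) ∉ F) a.1 a.1 := by
        refine Relation.TransGen.lift (fun x : W => x.1) ?_ _ _ ha
        rintro x y ⟨hxy, hnG⟩
        refine ⟨hxy, fun hF => hnG ?_⟩
        exact Finset.mem_filter.mpr ⟨Finset.mem_univ _, hF⟩
      exact hFac a.1 this
    have h1 : fas r' ≤ G'.card := fas_le r' G' hac
    have h2 : G'.card ≤ F.card := by
      refine Finset.card_le_card_of_injOn (fun p : W × W => (p.1.1, p.2.1)) ?_ ?_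
      · intro p hp
        exact (Finset.mem_filter.mp hp).2
      · intro p _ q _ h
        simp only [Prod.mk.injEq] at h
        exact Prod.ext (Subtype.ext h.1) (Subtype.ext h.2)
    calc fas r' ≤ G'.card := h1
      _ ≤ F.card := h2
      _ = fas r := hFcard
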